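/- arXiv:2105.14033 — 2 statements merged into one kernel-verified Lean document; each statement's English description precedes it below -/
import Mathlib

section
/- Suppose the sequences (X^k, y^k, S^k) (k ≥ 1), X^0 ∈ S^n_+, σ_k (k ≥ 0) and ε_k satisfy the iPGM conditions, and suppose there is M > 0 with ‖y^k‖ ≤ M for all k ≥ 1. Let X* ∈ S^n satisfy X* ⪰ 0 and A(X*) = b (in particular X* may be an optimal solution of (P)). Then for every k ≥ 1: ⟨C, X^k − X*⟩ ≤ (1/k) ( (1/(2σ_0))‖X^0 − X*‖² + 2M Σ_{i=1}^{k} i ε_i ). -/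
set_option autoImplicit false

open Matrix Finset Filter
open scoped RealInnerProductSpace

noncomputable section

/-- The trace inner product `⟨X, Y⟩ = trace (Xᵀ * Y)` on real `n × n` matrices. -/
def mInner {n : ℕ} (X Y : Matrix (Fin n) (Fin n) ℝ) : ℝ := (Xᵀ * Y).trace

/-- The Frobenius norm induced by the trace inner product. -/
def mNorm {n : ℕ} (X : Matrix (Fin n) (Fin n) ℝ) : ℝ := Real.sqrt (mInner X X)

/-- `ℝ^m` with the Euclidean inner product. -/
abbrev Vec (m : ℕ) := EuclideanSpace ℝ (Fin m)

def toE {n : ℕ} (X : Matrix (Fin n) (Fin n) ℝ) : EuclideanSpace ℝ (Fin n × Fin n) :=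
  WithLp.toLp 2 (fun p : Fin n × Fin n => X p.1 p.2)

lemma mInner_eq_inner {n : ℕ} (X Y : Matrix (Fin n) (Fin n) ℝ) :
    mInner X Y = ⟪toE X, toE Y⟫ := by
  simp only [mInner, Matrix.trace, Matrix.diag, Matrix.mul_apply, Matrix.transpose_apply,
    PiLp.inner_apply, RCLike.inner_apply, conj_trivial, toE, PiLp.toLp_apply]
  rw [Fintype.sum_prod_type]
  rw [Finset.sum_comm]
  exact Finset.sum_congr rfl fun _ _ => Finset.sum_congr rfl fun _ _ => mul_comm _ _

lemma toE_sub {n : ℕ} (X Y : Matrix (Fin n) (Fin n) ℝ) : toE (X - Y) = toE X - toE Y := by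
  simp only [toE, ← WithLp.toLp_sub]; rfl

lemma mInner_symm {n : ℕ} (X Y : Matrix (Fin n) (Fin n) ℝ) : mInner X Y = mInner Y X := by
  rw [mInner_eq_inner, mInner_eq_inner, real_inner_comm]

lemma mNorm_sq {n : ℕ} (Z : Matrix (Fin n) (Fin n) ℝ) : mNorm Z ^ 2 = ‖toE Z‖ ^ 2 := by
  rw [mNorm, mInner_eq_inner, real_inner_self_eq_norm_sq, Real.sqrt_sq (norm_nonneg _)]

lemma mInner_add_left {n : ℕ} (P Q Z : Matrix (Fin n) (Fin n) ℝ) :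
    mInner (P + Q) Z = mInner P Z + mInner Q Z := by
  simp [mInner, Matrix.transpose_add, Matrix.add_mul]

lemma mInner_sub_left {n : ℕ} (P Q Z : Matrix (Fin n) (Fin n) ℝ) :
    mInner (P - Q) Z = mInner P Z - mInner Q Z := by
  simp [mInner, Matrix.transpose_sub, Matrix.sub_mul]

lemma mInner_smul_left {n : ℕ} (c : ℝ) (P Z : Matrix (Fin n) (Fin n) ℝ) :
    mInner (c • P) Z = c * mInner P Z := by
  simp [mInner, Matrix.transpose_smul, Matrix.smul_mul]

lemma mInner_sub_right {n : ℕ} (Z P Q : Matrix (Fin n) (Fin n) ℝ) :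
    mInner Z (P - Q) = mInner Z P - mInner Z Q := by
  simp [mInner, Matrix.mul_sub]

lemma mInner_self_nonneg {n : ℕ} (Z : Matrix (Fin n) (Fin n) ℝ) : 0 ≤ mInner Z Z := by
  rw [mInner_eq_inner]; exact real_inner_self_nonneg

lemma psd_eq_conjTranspose_mul_self {n : ℕ} {P : Matrix (Fin n) (Fin n) ℝ}
    (hP : P.PosSemidef) : ∃ B : Matrix (Fin n) (Fin n) ℝ, P = Bᴴ * B := by
  open scoped MatrixOrder Matrix.Norms.L2Operator in
  obtain ⟨B, hB⟩ := CStarAlgebra.nonneg_iff_eq_star_mul_self.mp hP.nonneg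
  exact ⟨B, hB⟩

lemma mInner_psd_nonneg {n : ℕ} {P Q : Matrix (Fin n) (Fin n) ℝ}
    (hP : P.PosSemidef) (hQ : Q.PosSemidef) : 0 ≤ mInner P Q := by
  obtain ⟨B, hB⟩ := psd_eq_conjTranspose_mul_self hP
  obtain ⟨D, hD⟩ := psd_eq_conjTranspose_mul_self hQ
  rw [Matrix.conjTranspose_eq_transpose_of_trivial] at hB hD
  have hPt : Pᵀ = P := by rw [hB]; simp [Matrix.transpose_mul]
  have : mInner P Q = mInner (B * Dᵀ) (B * Dᵀ) := by
    rw [mInner, hPt, hB, hD, mInner, Matrix.transpose_mul, Matrix.transpose_transpose]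
    rw [show Bᵀ * B * (Dᵀ * D) = (Bᵀ * B * Dᵀ) * D by noncomm_ring,
      Matrix.trace_mul_comm]
    congr 1
    noncomm_ring
  rw [this]
  exact mInner_self_nonneg _

/-- objective upper bound for the inexact projected gradient method (iPGM). -/
theorem ipgm_objective_upper_bound {n m : ℕ}
    (A : Matrix (Fin n) (Fin n) ℝ →ₗ[ℝ] Vec m)
    (Aadj : Vec m →ₗ[ℝ] Matrix (Fin n) (Fin n) ℝ)
    (hadj : ∀ (X : Matrix (Fin n) (Fin n) ℝ) (ξ : Vec m), ⟪A X, ξ⟫ = mInner X (Aadj ξ))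
    (b : Vec m) (C : Matrix (Fin n) (Fin n) ℝ) (hC : C.IsSymm)
    (X : ℕ → Matrix (Fin n) (Fin n) ℝ) (y : ℕ → Vec m)
    (S : ℕ → Matrix (Fin n) (Fin n) ℝ)
    (σ : ℕ → ℝ) (ε : ℕ → ℝ)
    -- iPGM conditions
    (hX0 : (X 0).PosSemidef)
    (hXpsd : ∀ k, 1 ≤ k → (X k).PosSemidef)
    (hSpsd : ∀ k, 1 ≤ k → (S k).PosSemidef)
    (hσpos : ∀ k, 0 < σ k) (hσmono : Monotone σ)
    (hεnonneg : ∀ k, 0 ≤ ε k)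
    (hfeas : ∀ k, 1 ≤ k → ‖A (X k) - b‖ ≤ ε k)
    (hdual : ∀ k, 1 ≤ k → Aadj (y k) + S k - C = (1 / σ k) • (X k - X (k - 1)))
    (hcomp : ∀ k, 1 ≤ k → mInner (X k) (S k) = 0)
    -- boundedness of the dual multipliers
    (M : ℝ) (hM : 0 < M) (hy : ∀ k, 1 ≤ k → ‖y k‖ ≤ M)
    -- a primal feasible point (in particular a primal optimal solution)
    (Xstar : Matrix (Fin n) (Fin n) ℝ) (hXstar : Xstar.PosSemidef)
    (hAXstar : A Xstar = b) :
    ∀ k, 1 ≤ k →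
      mInner C (X k - Xstar) ≤
        (1 / (k : ℝ)) * ((1 / (2 * σ 0)) * mNorm (X 0 - Xstar) ^ 2
          + 2 * M * ∑ i ∈ Finset.Icc 1 k, (i : ℝ) * ε i) := by
  -- abbreviations
  set d : ℕ → ℝ := fun j => ‖toE (X j - Xstar)‖ ^ 2 with hd_def
  set h : ℕ → ℝ := fun k => mInner C (X k - Xstar) with hh_def
  have hd0 : ∀ j, 0 ≤ d j := fun j => sq_nonneg _
  -- expansion of mInner C Z using the dual equation
  have expand : ∀ k, 1 ≤ k → ∀ Z : Matrix (Fin n) (Fin n) ℝ,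
      mInner C Z = ⟪A Z, y k⟫ + mInner (S k) Z
        - (1 / σ k) * mInner (X k - X (k - 1)) Z := by
    intro k hk Z
    have hC' : C = Aadj (y k) + S k - (1 / σ k) • (X k - X (k - 1)) := by
      rw [← hdual k hk]; abel
    rw [hC', mInner_sub_left, mInner_add_left, mInner_smul_left]
    congr 1
    rw [mInner_symm, ← hadj]
  -- the S-term is nonpositive against any X j (j ≥ 1 would give 0, Xstar gives ≤ 0)
  have hS_Xstar : ∀ k, 1 ≤ k → mInner (S k) (X k - Xstar) ≤ 0 := by
    intro k hk
    rw [mInner_sub_right]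
    have h1 : mInner (S k) (X k) = 0 := by rw [mInner_symm]; exact hcomp k hk
    have h2 : 0 ≤ mInner (S k) Xstar := mInner_psd_nonneg (hSpsd k hk) hXstar
    linarith
  -- key inequality 1
  have key1 : ∀ k, 1 ≤ k →
      h k ≤ M * ε k + 1 / (2 * σ k) * (d (k - 1) - d k) := by
    intro k hk
    have hE := expand k hk (X k - Xstar)
    -- term 1
    have hT1 : ⟪A (X k - Xstar), y k⟫ ≤ M * ε k := by
      rw [map_sub, hAXstar]
      calc ⟪A (X k) - b, y k⟫ ≤ ‖A (X k) - b‖ * ‖y k‖ := real_inner_le_norm _ _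
        _ ≤ ε k * M := by
            apply mul_le_mul (hfeas k hk) (hy k hk) (norm_nonneg _) (hεnonneg k)
        _ = M * ε k := mul_comm _ _
    -- term 3
    have hT3 : -(1 / σ k * mInner (X k - X (k - 1)) (X k - Xstar))
        ≤ 1 / (2 * σ k) * (d (k - 1) - d k) := by
      have hinner : mInner (X k - X (k - 1)) (X k - Xstar)
          = ⟪toE (X k - X (k - 1)), toE (X k - Xstar)⟫ := mInner_eq_inner _ _
      have huv : toE (X k - X (k - 1)) - toE (X k - Xstar) = toE (Xstar - X (k - 1)) := by
        rw [← toE_sub]; congr 1; abel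
      have hzero : toE (0 : Matrix (Fin n) (Fin n) ℝ) = 0 := by
          simp only [toE, ← WithLp.toLp_zero]; rfl
      have hnuv : ‖toE (X k - X (k - 1)) - toE (X k - Xstar)‖
          = ‖toE (X (k - 1) - Xstar)‖ := by
        rw [huv, show Xstar - X (k - 1) = (0 : Matrix (Fin n) (Fin n) ℝ)
            - (X (k - 1) - Xstar) by abel, toE_sub, hzero, zero_sub, norm_neg]
      have hpol : ‖toE (X k - X (k - 1)) - toE (X k - Xstar)‖ ^ 2
          = ‖toE (X k - X (k - 1))‖ ^ 2
            - 2 * ⟪toE (X k - X (k - 1)), toE (X k - Xstar)⟫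
            + ‖toE (X k - Xstar)‖ ^ 2 := norm_sub_sq_real _ _
      have hI : (d k - d (k - 1)) / 2 ≤ ⟪toE (X k - X (k - 1)), toE (X k - Xstar)⟫ := by
        have hnn : ‖toE (X k - X (k - 1)) - toE (X k - Xstar)‖ ^ 2 = d (k - 1) := by
          rw [hnuv]
        have hv : ‖toE (X k - Xstar)‖ ^ 2 = d k := rfl
        nlinarith [sq_nonneg ‖toE (X k - X (k - 1))‖]
      have hc : 0 < 1 / (2 * σ k) := by
        apply div_pos one_pos; have := hσpos k; linarith
      have h2c : 1 / σ k = 2 * (1 / (2 * σ k)) := by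
        rw [mul_one_div, div_eq_div_iff (hσpos k).ne' (by have := hσpos k; positivity)]
        ring
      rw [hinner, h2c]
      nlinarith [mul_le_mul_of_nonneg_left hI hc.le]
    have hT2 := hS_Xstar k hk
    rw [hh_def]
    simp only []
    rw [hE]
    linarith
  -- key inequality 2 : near-monotonicity of h
  have key2 : ∀ k, 1 ≤ k → h (k + 1) ≤ h k + M * (ε (k + 1) + ε k) := by
    intro k hk
    have hdiff : h (k + 1) - h k = mInner C (X (k + 1) - X k) := by
      rw [hh_def]
      simp only []
      rw [← mInner_sub_right, show X (k + 1) - Xstar - (X k - Xstar) = X (k + 1) - X k by abel]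
    have hE := expand (k + 1) (by omega) (X (k + 1) - X k)
    rw [show k + 1 - 1 = k from rfl] at hE
    have hT1 : ⟪A (X (k + 1) - X k), y (k + 1)⟫ ≤ M * (ε (k + 1) + ε k) := by
      rw [map_sub]
      have hre : A (X (k + 1)) - A (X k) = (A (X (k + 1)) - b) - (A (X k) - b) := by abel
      rw [hre]
      calc ⟪A (X (k + 1)) - b - (A (X k) - b), y (k + 1)⟫
          ≤ ‖A (X (k + 1)) - b - (A (X k) - b)‖ * ‖y (k + 1)‖ := real_inner_le_norm _ _
        _ ≤ (ε (k + 1) + ε k) * M := by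
            apply mul_le_mul _ (hy (k + 1) (by omega)) (norm_nonneg _)
              (by have := hεnonneg (k + 1); have := hεnonneg k; linarith)
            calc ‖A (X (k + 1)) - b - (A (X k) - b)‖
                ≤ ‖A (X (k + 1)) - b‖ + ‖A (X k) - b‖ := norm_sub_le _ _
              _ ≤ ε (k + 1) + ε k := add_le_add (hfeas _ (by omega)) (hfeas _ hk)
        _ = M * (ε (k + 1) + ε k) := mul_comm _ _
    have hT2 : mInner (S (k + 1)) (X (k + 1) - X k) ≤ 0 := by
      rw [mInner_sub_right]
      have h1 : mInner (S (k + 1)) (X (k + 1)) = 0 := by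
        rw [mInner_symm]; exact hcomp (k + 1) (by omega)
      have h2 : 0 ≤ mInner (S (k + 1)) (X k) :=
        mInner_psd_nonneg (hSpsd (k + 1) (by omega)) (hXpsd k hk)
      linarith
    have hT3 : 0 ≤ 1 / σ (k + 1) * mInner (X (k + 1) - X k) (X (k + 1) - X k) :=
      mul_nonneg (le_of_lt (div_pos one_pos (hσpos (k + 1))))
        (mInner_self_nonneg (X (k + 1) - X k))
    linarith [hdiff, hE.le, hE.ge]
  -- monotonicity of the step sizes
  have hamono : ∀ j k : ℕ, j ≤ k → 1 / (2 * σ k) ≤ 1 / (2 * σ j) := by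
    intro j k hjk
    apply one_div_le_one_div_of_le (by have := hσpos j; linarith)
    have := hσmono hjk; linarith
  -- main induction
  have main : ∀ k : ℕ, 1 ≤ k →
      (k : ℝ) * h k + 1 / (2 * σ k) * d k ≤
        (1 / (2 * σ 0)) * d 0 + M * (2 * ∑ i ∈ Finset.Icc 1 k, (i : ℝ) * ε i)
          - M * k * ε k := by
    intro k hk
    induction k, hk using Nat.le_induction with
    | base =>
      have h1 := key1 1 le_rfl
      have ha := hamono 0 1 (by omega)
      have hsum : ∑ i ∈ Finset.Icc (1:ℕ) 1, (i : ℝ) * ε i = 1 * ε 1 := by simp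
      rw [hsum]
      push_cast
      nlinarith [hd0 0, hd0 1]
    | succ k hk ih =>
      have h1 := key1 (k + 1) (by omega)
      rw [show k + 1 - 1 = k from rfl] at h1
      have h2 := key2 k hk
      have ha := hamono k (k + 1) (by omega)
      have hsum : ∑ i ∈ Finset.Icc 1 (k + 1), (i : ℝ) * ε i
          = (∑ i ∈ Finset.Icc 1 k, (i : ℝ) * ε i) + (k + 1 : ℝ) * ε (k + 1) := by
        rw [Finset.sum_Icc_succ_top (by omega)]
        push_cast
        ring
      rw [hsum]
      have hk0 : (0:ℝ) ≤ (k:ℝ) := Nat.cast_nonneg k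
      -- combine: (k+1) h_{k+1} = k h_{k+1} + h_{k+1}
      have e1 : (k:ℝ) * h (k + 1) ≤ (k:ℝ) * h k + (k:ℝ) * (M * (ε (k + 1) + ε k)) := by
        nlinarith [mul_le_mul_of_nonneg_left h2 hk0]
      have e2 : h (k + 1) + 1 / (2 * σ (k + 1)) * d (k + 1)
          ≤ M * ε (k + 1) + 1 / (2 * σ k) * d k := by
        have := mul_le_mul_of_nonneg_right ha (hd0 k)
        linarith
      push_cast
      nlinarith [hd0 (k + 1), hεnonneg (k + 1), hεnonneg k]
  -- conclusion
  intro k hk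
  have hk0 : (0:ℝ) < (k:ℝ) := by exact_mod_cast hk
  have hmain := main k hk
  have hdrop : (k : ℝ) * h k ≤
      (1 / (2 * σ 0)) * d 0 + 2 * M * ∑ i ∈ Finset.Icc 1 k, (i : ℝ) * ε i := by
    have h1 : 0 ≤ 1 / (2 * σ k) * d k :=
      mul_nonneg (le_of_lt (div_pos one_pos (by have := hσpos k; linarith))) (hd0 k)
    have h2 : 0 ≤ M * k * ε k :=
      mul_nonneg (mul_nonneg hM.le (Nat.cast_nonneg k)) (hεnonneg k)
    linarith
  have hgoal : h k ≤ (1 / (k : ℝ)) *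
      ((1 / (2 * σ 0)) * d 0 + 2 * M * ∑ i ∈ Finset.Icc 1 k, (i : ℝ) * ε i) := by
    rw [one_div, inv_mul_eq_div, le_div_iff₀ hk0, mul_comm]
    exact hdrop
  have hdeq : mNorm (X 0 - Xstar) ^ 2 = d 0 := mNorm_sq _
  rw [hh_def] at hgoal
  simpa [hdeq] using hgoal
end
end

section
/- (sGS decomposition theorem.) Let A : S^n → R^m be a surjective linear map, Z ∈ S^n, b ∈ R^m, and define f(W, ξ) = ½‖W + A*ξ + Z‖² − ⟨b, ξ⟩ on S^n × R^m. Fix W̃ ∈ S^n and define q(W, ξ) = f(W, ξ) + ½⟨A(W − W̃), (AA*)^{−1} A(W − W̃)⟩. Set ξ† = (AA*)^{−1}( b − A(Z) − A(W̃) ), W⁺ = Π_{S^n_+}( −A*ξ† − Z ), and ξ⁺ = (AA*)^{−1}( b − A(Z) − A(W⁺) ). Then (W⁺, ξ⁺) is the unique minimizer of q(W, ξ) over all (W, ξ) with W ⪰ 0 and ξ ∈ R^m; moreover ξ† minimizes ξ ↦ f(W̃, ξ), W⁺ minimizes W ↦ f(W, ξ†) over W ⪰ 0, and ξ⁺ minimizes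 ξ ↦ f(W⁺, ξ). -/
set_option autoImplicit false

open Matrix Finset Filter
open scoped RealInnerProductSpace

noncomputable section
set_option maxHeartbeats 1000000

/-- `P` is the (unique) nearest positive semidefinite matrix to `Z` in the Frobenius norm,
i.e. the projection of `Z` onto the PSD cone. -/
def IsProjPSD {n : ℕ} (Z P : Matrix (Fin n) (Fin n) ℝ) : Prop :=
  P.PosSemidef ∧
    ∀ Y : Matrix (Fin n) (Fin n) ℝ, Y.PosSemidef → mNorm (P - Z) ≤ mNorm (Y - Z)

section helpers
variable {n : ℕ} (X Y W : Matrix (Fin n) (Fin n) ℝ)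

lemma mInner_comm : mInner X Y = mInner Y X := by
  rw [mInner, mInner, ← Matrix.trace_transpose, Matrix.transpose_mul, Matrix.transpose_transpose]

lemma mInner_add_left_s7 : mInner (X + Y) W = mInner X W + mInner Y W := by
  simp [mInner, Matrix.transpose_add, Matrix.add_mul]

lemma mInner_add_right : mInner W (X + Y) = mInner W X + mInner W Y := by
  simp [mInner, Matrix.mul_add]

lemma mInner_sub_left_s7 : mInner (X - Y) W = mInner X W - mInner Y W := by
  simp [mInner, Matrix.transpose_sub, Matrix.sub_mul]

lemma mInner_sub_right_s7 : mInner W (X - Y) = mInner W X - mInner W Y := by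
  simp [mInner, Matrix.mul_sub]

lemma mInner_smul_left_s7 (c : ℝ) : mInner (c • X) Y = c * mInner X Y := by
  simp [mInner, Matrix.transpose_smul, Matrix.smul_mul]

lemma mInner_smul_right (c : ℝ) : mInner X (c • Y) = c * mInner X Y := by
  simp [mInner, Matrix.mul_smul]

lemma mInner_zero_right : mInner X (0 : Matrix (Fin n) (Fin n) ℝ) = 0 := by
  simp [mInner]

lemma mInner_expand_add : mInner (X + Y) (X + Y)
    = mInner X X + 2 * mInner X Y + mInner Y Y := by
  rw [mInner_add_left_s7, mInner_add_right, mInner_add_right, mInner_comm Y X]; ring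

lemma mInner_expand_sub : mInner (X - Y) (X - Y)
    = mInner X X - 2 * mInner X Y + mInner Y Y := by
  rw [mInner_sub_left_s7, mInner_sub_right_s7, mInner_sub_right_s7, mInner_comm Y X]; ring

lemma mInner_self_eq : mInner X X = ∑ i, ∑ j, X j i * X j i := by
  simp [mInner, Matrix.trace, Matrix.mul_apply, Matrix.diag]

lemma mInner_self_nonneg_s7 : 0 ≤ mInner X X := by
  rw [mInner_self_eq]
  exact Finset.sum_nonneg fun i _ => Finset.sum_nonneg fun j _ => mul_self_nonneg _

lemma mInner_self_eq_zero : mInner X X = 0 → X = 0 := by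
  intro h
  rw [mInner_self_eq] at h
  ext j i
  have h1 := (Finset.sum_eq_zero_iff_of_nonneg
    (fun i _ => Finset.sum_nonneg fun j _ => mul_self_nonneg _)).mp h i (Finset.mem_univ i)
  have h2 := (Finset.sum_eq_zero_iff_of_nonneg (fun j _ => mul_self_nonneg _)).mp h1 j
    (Finset.mem_univ j)
  simpa using mul_self_eq_zero.mp h2

lemma mNorm_sq_s7 : mNorm X ^ 2 = mInner X X := Real.sq_sqrt (mInner_self_nonneg_s7 X)

lemma mNorm_nonneg : 0 ≤ mNorm X := Real.sqrt_nonneg _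

lemma mInner_le_of_mNorm_le (h : mNorm X ≤ mNorm Y) : mInner X X ≤ mInner Y Y := by
  rw [← mNorm_sq_s7, ← mNorm_sq_s7]
  exact pow_le_pow_left₀ (mNorm_nonneg X) h 2

end helpers

/-- the sGS decomposition theorem — the sGS proximal subproblem is solved
exactly by one backward and one forward Gauss–Seidel sweep. -/
theorem sGS_decomposition {n m : ℕ}
    (A : Matrix (Fin n) (Fin n) ℝ →ₗ[ℝ] Vec m)
    (Aadj : Vec m →ₗ[ℝ] Matrix (Fin n) (Fin n) ℝ)
    (hadj : ∀ (X : Matrix (Fin n) (Fin n) ℝ) (ξ : Vec m), ⟪A X, ξ⟫ = mInner X (Aadj ξ))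
    (hAadjSymm : ∀ ξ : Vec m, (Aadj ξ).IsSymm)
    (hsurj : Function.Surjective ⇑A)
    -- `B` is the inverse of `A A*`
    (B : Vec m →ₗ[ℝ] Vec m)
    (hB1 : ∀ ξ : Vec m, A (Aadj (B ξ)) = ξ)
    (hB2 : ∀ ξ : Vec m, B (A (Aadj ξ)) = ξ)
    -- the projection onto the PSD cone
    (proj : Matrix (Fin n) (Fin n) ℝ → Matrix (Fin n) (Fin n) ℝ)
    (hproj : ∀ Y : Matrix (Fin n) (Fin n) ℝ, IsProjPSD Y (proj Y))
    (Z : Matrix (Fin n) (Fin n) ℝ) (hZ : Z.IsSymm) (b : Vec m)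
    (Wt : Matrix (Fin n) (Fin n) ℝ) (hWt : Wt.IsSymm) :
    let f : Matrix (Fin n) (Fin n) ℝ → Vec m → ℝ :=
      fun W ξ => (1 / 2) * mNorm (W + Aadj ξ + Z) ^ 2 - ⟪b, ξ⟫
    let q : Matrix (Fin n) (Fin n) ℝ → Vec m → ℝ :=
      fun W ξ => f W ξ + (1 / 2) * ⟪A (W - Wt), B (A (W - Wt))⟫
    let ξdag : Vec m := B (b - A Z - A Wt)
    let Wplus : Matrix (Fin n) (Fin n) ℝ := proj (-(Aadj ξdag) - Z)
    let ξplus : Vec m := B (b - A Z - A Wplus)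
    -- (W⁺, ξ⁺) is the unique minimizer of q over PSD W and arbitrary ξ
    (∀ (W : Matrix (Fin n) (Fin n) ℝ) (ξ : Vec m), W.PosSemidef →
        q Wplus ξplus ≤ q W ξ) ∧
    (∀ (W : Matrix (Fin n) (Fin n) ℝ) (ξ : Vec m), W.PosSemidef →
        q W ξ = q Wplus ξplus → W = Wplus ∧ ξ = ξplus) ∧
    -- ξ† minimizes f(W̃, ·)
    (∀ ξ : Vec m, f Wt ξdag ≤ f Wt ξ) ∧
    -- W⁺ minimizes f(·, ξ†) over PSD matrices
    (∀ W : Matrix (Fin n) (Fin n) ℝ, W.PosSemidef → f Wplus ξdag ≤ f W ξdag) ∧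
    -- ξ⁺ minimizes f(W⁺, ·)
    (∀ ξ : Vec m, f Wplus ξplus ≤ f Wplus ξ) := by
  intro f q ξdag Wplus ξplus
  have hf : f = fun W ξ => (1 / 2) * mNorm (W + Aadj ξ + Z) ^ 2 - ⟪b, ξ⟫ := rfl
  have hq : q = fun W ξ => f W ξ + (1 / 2) * ⟪A (W - Wt), B (A (W - Wt))⟫ := rfl
  have hξdag : ξdag = B (b - A Z - A Wt) := rfl
  have hWplus : Wplus = proj (-(Aadj ξdag) - Z) := rfl
  have hξplus : ξplus = B (b - A Z - A Wplus) := rfl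
  -- KEY LEMMA I: f W ξ = f W (ξ*(W)) + ½ ‖A*(ξ - ξ*(W))‖²
  have keyI : ∀ (W : Matrix (Fin n) (Fin n) ℝ) (ξ : Vec m),
      f W ξ = f W (B (b - A Z - A W)) +
        (1 / 2) * mInner (Aadj (ξ - B (b - A Z - A W))) (Aadj (ξ - B (b - A Z - A W))) := by
    intro W ξ
    have hAU : A (W + Aadj (B (b - A Z - A W)) + Z) = b := by
      simp only [map_add, hB1]; abel
    have hsplit : W + Aadj ξ + Z
        = (W + Aadj (B (b - A Z - A W)) + Z) + Aadj (ξ - B (b - A Z - A W)) := by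
      rw [map_sub Aadj ξ (B (b - A Z - A W))]; abel
    have hUD : mInner (W + Aadj (B (b - A Z - A W)) + Z) (Aadj (ξ - B (b - A Z - A W)))
        = ⟪b, ξ⟫ - ⟪b, B (b - A Z - A W)⟫ := by
      rw [← hadj, hAU, inner_sub_right]
    simp only [hf]
    rw [hsplit, mNorm_sq_s7, mNorm_sq_s7,
      mInner_expand_add (W + Aadj (B (b - A Z - A W)) + Z) (Aadj (ξ - B (b - A Z - A W))), hUD]
    ring
  -- KEY LEMMA II
  have keyII : ∀ W : Matrix (Fin n) (Fin n) ℝ,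
      f W (B (b - A Z - A W)) + (1 / 2) * ⟪A (W - Wt), B (A (W - Wt))⟫
        = (f Wt ξdag - (1 / 2) * mInner (Wt + Aadj ξdag + Z) (Wt + Aadj ξdag + Z))
          + (1 / 2) * mInner (W + Aadj ξdag + Z) (W + Aadj ξdag + Z) := by
    intro W
    have hAV : A (Wt + Aadj ξdag + Z) = b := by
      simp only [hξdag, map_add, hB1]; abel
    have hs : B (b - A Z - A W) = ξdag - B (A (W - Wt)) := by
      simp only [hξdag, map_sub]; abel
    have hU : W + Aadj (ξdag - B (A (W - Wt))) + Z
        = (Wt + Aadj ξdag + Z) + ((W - Wt) - Aadj (B (A (W - Wt)))) := by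
      rw [map_sub Aadj ξdag (B (A (W - Wt)))]; abel
    have hVΔ : W + Aadj ξdag + Z = (Wt + Aadj ξdag + Z) + (W - Wt) := by abel
    have h1 : mInner (Wt + Aadj ξdag + Z) (Aadj (B (A (W - Wt)))) = ⟪b, B (A (W - Wt))⟫ := by
      rw [← hadj, hAV]
    have h2 : mInner (W - Wt) (Aadj (B (A (W - Wt)))) = ⟪A (W - Wt), B (A (W - Wt))⟫ := by
      rw [← hadj]
    have h3 : mInner (Aadj (B (A (W - Wt)))) (Aadj (B (A (W - Wt))))
        = ⟪A (W - Wt), B (A (W - Wt))⟫ := by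
      rw [← hadj, hB1]
    simp only [hf]
    rw [hs, hU, hVΔ, mNorm_sq_s7, mNorm_sq_s7,
      mInner_expand_add (Wt + Aadj ξdag + Z) (W - Wt - Aadj (B (A (W - Wt)))),
      mInner_expand_add (Wt + Aadj ξdag + Z) (W - Wt),
      mInner_sub_right_s7 (W - Wt) (Aadj (B (A (W - Wt)))) (Wt + Aadj ξdag + Z),
      mInner_expand_sub (W - Wt) (Aadj (B (A (W - Wt)))),
      h1, h2, h3, inner_sub_right]
    ring
  -- q in canonical form
  have qform : ∀ (W : Matrix (Fin n) (Fin n) ℝ) (ξ : Vec m),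
      q W ξ = (f Wt ξdag - (1 / 2) * mInner (Wt + Aadj ξdag + Z) (Wt + Aadj ξdag + Z))
        + (1 / 2) * mInner (W + Aadj ξdag + Z) (W + Aadj ξdag + Z)
        + (1 / 2) * mInner (Aadj (ξ - B (b - A Z - A W))) (Aadj (ξ - B (b - A Z - A W))) := by
    intro W ξ
    have h1 := keyI W ξ
    have h2 := keyII W
    simp only [hq]
    linarith
  -- projection facts
  have hP := hproj (-(Aadj ξdag) - Z)
  have hPsd : Wplus.PosSemidef := by rw [hWplus]; exact hP.1
  have harr : ∀ X : Matrix (Fin n) (Fin n) ℝ, X - (-(Aadj ξdag) - Z) = X + Aadj ξdag + Z := by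
    intro X; abel
  have hle : ∀ W : Matrix (Fin n) (Fin n) ℝ, W.PosSemidef →
      mInner (Wplus + Aadj ξdag + Z) (Wplus + Aadj ξdag + Z)
        ≤ mInner (W + Aadj ξdag + Z) (W + Aadj ξdag + Z) := by
    intro W hW
    have h := hP.2 W hW
    rw [harr, harr, ← hWplus] at h
    exact mInner_le_of_mNorm_le _ _ h
  have hq0 : q Wplus ξplus
      = (f Wt ξdag - (1 / 2) * mInner (Wt + Aadj ξdag + Z) (Wt + Aadj ξdag + Z))
        + (1 / 2) * mInner (Wplus + Aadj ξdag + Z) (Wplus + Aadj ξdag + Z) := by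
    rw [qform]
    have h0 : ξplus - B (b - A Z - A Wplus) = 0 := by rw [hξplus, sub_self]
    rw [h0, map_zero, mInner_zero_right]
    ring
  refine ⟨?_, ?_, ?_, ?_, ?_⟩
  · -- minimality of q
    intro W ξ hW
    rw [hq0, qform W ξ]
    have := hle W hW
    have := mInner_self_nonneg_s7 (Aadj (ξ - B (b - A Z - A W)))
    linarith
  · -- uniqueness
    intro W ξ hW heq
    rw [hq0, qform W ξ] at heq
    have hd0 : mInner (Aadj (ξ - B (b - A Z - A W))) (Aadj (ξ - B (b - A Z - A W))) = 0 := by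
      have h1 := hle W hW
      have h2 := mInner_self_nonneg_s7 (Aadj (ξ - B (b - A Z - A W)))
      linarith
    have hDzero : Aadj (ξ - B (b - A Z - A W)) = 0 := mInner_self_eq_zero _ hd0
    have hξeq : ξ = B (b - A Z - A W) := by
      have h := hB2 (ξ - B (b - A Z - A W))
      rw [hDzero, map_zero, map_zero] at h
      exact (sub_eq_zero.mp h.symm)
    have haeq : mInner (W + Aadj ξdag + Z) (W + Aadj ξdag + Z)
        = mInner (Wplus + Aadj ξdag + Z) (Wplus + Aadj ξdag + Z) := by
      have h1 := hle W hW; linarith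
    -- midpoint argument
    have hMpsd : ((1 / 2 : ℝ) • (W + Wplus)).PosSemidef := by
      constructor
      · have h := (hW.1.add hPsd.1)
        simp only [Matrix.IsHermitian] at h ⊢
        rw [Matrix.conjTranspose_smul, h]
        congr 1
      · intro x
        have h := (hW.add hPsd).2 x
        simp only [Matrix.smul_apply, smul_eq_mul, Finsupp.sum] at h ⊢
        have e : ∀ i j, star (x i) * (1 / 2 * (W + Wplus) i j) * x j
            = 1 / 2 * (star (x i) * (W + Wplus) i j * x j) := by intros; ring
        simp only [e, ← Finset.mul_sum]
        linarith
    have hMdist := hP.2 _ hMpsd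
    rw [harr, harr, ← hWplus] at hMdist
    have hMsq := mInner_le_of_mNorm_le _ _ hMdist
    have hMexp : (1 / 2 : ℝ) • (W + Wplus) + Aadj ξdag + Z
        = (1 / 2 : ℝ) • ((W + Aadj ξdag + Z) + (Wplus + Aadj ξdag + Z)) := by
      match_scalars <;> ring
    rw [hMexp, mInner_smul_left_s7, mInner_smul_right,
      mInner_expand_add (W + Aadj ξdag + Z) (Wplus + Aadj ξdag + Z)] at hMsq
    have hsub : W - Wplus = (W + Aadj ξdag + Z) - (Wplus + Aadj ξdag + Z) := by abel
    have hexp : mInner (W - Wplus) (W - Wplus)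
        = mInner (W + Aadj ξdag + Z) (W + Aadj ξdag + Z)
          - 2 * mInner (W + Aadj ξdag + Z) (Wplus + Aadj ξdag + Z)
          + mInner (Wplus + Aadj ξdag + Z) (Wplus + Aadj ξdag + Z) := by
      rw [hsub]; exact mInner_expand_sub _ _
    have hdiff : mInner (W - Wplus) (W - Wplus) = 0 := by
      have hnn := mInner_self_nonneg_s7 (W - Wplus)
      rw [hexp] at hnn ⊢
      linarith
    have hWeq : W = Wplus := sub_eq_zero.mp (mInner_self_eq_zero _ hdiff)
    refine ⟨hWeq, ?_⟩
    rw [hξeq, hWeq, ← hξplus]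
  · -- ξdag minimizes f Wt
    intro ξ
    rw [keyI Wt ξ, ← hξdag]
    exact le_add_of_nonneg_right (mul_nonneg (by norm_num) (mInner_self_nonneg_s7 _))
  · -- Wplus minimizes f · ξdag over PSD
    intro W hW
    simp only [hf]
    rw [mNorm_sq_s7, mNorm_sq_s7]
    have := hle W hW
    linarith
  · -- ξplus minimizes f Wplus
    intro ξ
    rw [keyI Wplus ξ, ← hξplus]
    exact le_add_of_nonneg_right (mul_nonneg (by norm_num) (mInner_self_nonneg_s7 _))
end
end
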